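/- Assume 2^{ℵ₀} < 2^{ℵ₁}. Then for every almost disjoint family 𝒜 on ω of size ω₁ there exists a subfamily ℬ ⊆ 𝒜 of size ω₁ such that Ψ(𝒜) is not homeomorphic to Ψ(ℬ). -/

import Mathlib

open Set Cardinal

/-- An almost disjoint family on ω. -/
def ADFamily (𝒜 : Set (Set ℕ)) : Prop :=
  𝒜.Infinite ∧ (∀ A ∈ 𝒜, A.Infinite) ∧
    ∀ A ∈ 𝒜, ∀ B ∈ 𝒜, A ≠ B → (A ∩ B).Finite

/-- The Ψ-space topology on ℕ ⊕ 𝒜. -/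
def psiTop (𝒜 : Set (Set ℕ)) : TopologicalSpace (ℕ ⊕ ↥𝒜) :=
  TopologicalSpace.generateFrom
    ({U | ∃ n : ℕ, U = {Sum.inl n}} ∪
     {U | ∃ (A : ↥𝒜) (F : Finset ℕ),
        U = insert (Sum.inr A) (Sum.inl '' ((A : Set ℕ) \ ↑F))})

namespace PsiAux

lemma lift_two_power_aleph0 :
    Cardinal.lift.{u} ((2 : Cardinal.{0}) ^ Cardinal.aleph0)
      = (2 : Cardinal.{u}) ^ Cardinal.aleph0 := by
  rw [Cardinal.lift_power, Cardinal.lift_aleph0, Cardinal.lift_two]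

lemma lift_two_power_aleph1 :
    Cardinal.lift.{u} ((2 : Cardinal.{0}) ^ Cardinal.aleph 1)
      = (2 : Cardinal.{u}) ^ Cardinal.aleph 1 := by
  rw [Cardinal.lift_power, Cardinal.lift_two, ← Cardinal.succ_aleph0,
    Cardinal.lift_succ, Cardinal.lift_aleph0, Cardinal.succ_aleph0]

lemma mem_symm_image {α β : Type*} (e : α ≃ β) (U : Set β) (x : α) :
    x ∈ e.symm '' U ↔ e x ∈ U := by
  constructor
  · rintro ⟨u, hu, rfl⟩; rwa [e.apply_symm_apply]
  · intro h; exact ⟨e x, h, e.symm_apply_apply x⟩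

/-- Key lemma: any open set containing `inr A` contains `inl a` for all but
finitely many `a ∈ A`. -/
lemma open_finite_misses {𝒜 : Set (Set ℕ)} {U : Set (ℕ ⊕ ↥𝒜)}
    (hU : (psiTop 𝒜).IsOpen U) {A : ↥𝒜} (hA : Sum.inr A ∈ U) :
    {a ∈ (A : Set ℕ) | Sum.inl a ∉ U}.Finite := by
  have hU' : TopologicalSpace.GenerateOpen
      ({U | ∃ n : ℕ, U = {Sum.inl n}} ∪
       {U | ∃ (A : ↥𝒜) (F : Finset ℕ),
          U = insert (Sum.inr A) (Sum.inl '' ((A : Set ℕ) \ ↑F))}) U := hU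
  clear hU
  induction hU' with
  | basic V hV =>
      rcases hV with ⟨n, rfl⟩ | ⟨A', F, rfl⟩
      · simp at hA
      · have hAA : A = A' := by
          rcases hA with h | ⟨a, _, h⟩
          · exact Sum.inr.inj h
          · exact absurd h (by simp)
        subst hAA
        apply F.finite_toSet.subset
        intro a ha
        simp only [mem_setOf_eq] at ha
        by_contra haF
        exact ha.2 (Or.inr ⟨a, ⟨ha.1, haF⟩, rfl⟩)
  | univ => simp
  | inter U V hUo hVo ihU ihV =>
      have hsub : {a ∈ (A : Set ℕ) | Sum.inl a ∉ U ∩ V} ⊆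
          {a ∈ (A : Set ℕ) | Sum.inl a ∉ U} ∪ {a ∈ (A : Set ℕ) | Sum.inl a ∉ V} := by
        intro a ha
        simp only [mem_setOf_eq, Set.mem_inter_iff, not_and_or] at ha ⊢
        rcases ha.2 with h | h
        · exact Or.inl ⟨ha.1, h⟩
        · exact Or.inr ⟨ha.1, h⟩
      exact ((ihU hA.1).union (ihV hA.2)).subset hsub
  | sUnion S hS ih =>
      rcases hA with ⟨t, ht, hAt⟩
      apply (ih t ht hAt).subset
      intro a ha
      exact ⟨ha.1, fun h => ha.2 ⟨t, ht, h⟩⟩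

lemma singleton_inl_open (𝒜 : Set (Set ℕ)) (n : ℕ) :
    (psiTop 𝒜).IsOpen {Sum.inl n} :=
  TopologicalSpace.GenerateOpen.basic _ (Or.inl ⟨n, rfl⟩)

lemma basic_inr_open (𝒜 : Set (Set ℕ)) (A : ↥𝒜) (F : Finset ℕ) :
    (psiTop 𝒜).IsOpen (insert (Sum.inr A) (Sum.inl '' ((A : Set ℕ) \ ↑F))) :=
  TopologicalSpace.GenerateOpen.basic _ (Or.inr ⟨A, F, rfl⟩)

lemma inr_not_isolated {𝒜 : Set (Set ℕ)} (hinf : ∀ A ∈ 𝒜, A.Infinite)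
    (A : ↥𝒜) : ¬ (psiTop 𝒜).IsOpen {Sum.inr A} := by
  intro h
  have h2 := open_finite_misses h (mem_singleton _)
  have heq : {a ∈ (A : Set ℕ) | Sum.inl a ∉ ({Sum.inr A} : Set (ℕ ⊕ ↥𝒜))}
      = (A : Set ℕ) := by
    ext a; simp
  rw [heq] at h2
  exact hinf A.1 A.2 h2

section Homeo

variable {𝒜 ℬ : Set (Set ℕ)} {e : (ℕ ⊕ ↥𝒜) ≃ (ℕ ⊕ ↥ℬ)}

lemma homeo_inl (hℬinf : ∀ B ∈ ℬ, B.Infinite)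
    (hfor : ∀ U, (psiTop 𝒜).IsOpen U → (psiTop ℬ).IsOpen (e '' U)) (n : ℕ) :
    ∃ m, e (Sum.inl n) = Sum.inl m := by
  rcases h : e (Sum.inl n) with m | B
  · exact ⟨m, rfl⟩
  · exfalso
    have himg : e '' {Sum.inl n} = {Sum.inr B} := by rw [Set.image_singleton, h]
    have ho := hfor _ (singleton_inl_open 𝒜 n)
    rw [himg] at ho
    exact inr_not_isolated hℬinf B ho

lemma homeo_inr (h𝒜inf : ∀ A ∈ 𝒜, A.Infinite)
    (hback : ∀ U, (psiTop ℬ).IsOpen U → (psiTop 𝒜).IsOpen (e.symm '' U))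
    (A : ↥𝒜) : ∃ B, e (Sum.inr A) = Sum.inr B := by
  rcases h : e (Sum.inr A) with m | B
  · exfalso
    obtain ⟨k, hk⟩ := homeo_inl (e := e.symm) h𝒜inf hback m
    have h2 : e.symm (e (Sum.inr A)) = Sum.inl k := by rw [h]; exact hk
    rw [e.symm_apply_apply] at h2
    simp at h2
  · exact ⟨B, rfl⟩

lemma image_almost_subset
    (hback : ∀ U, (psiTop ℬ).IsOpen U → (psiTop 𝒜).IsOpen (e.symm '' U))
    (σ : ℕ → ℕ) (hσ : ∀ n, e (Sum.inl n) = Sum.inl (σ n))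
    {A : ↥𝒜} {B : ↥ℬ} (hAB : e (Sum.inr A) = Sum.inr B) :
    {a ∈ (A : Set ℕ) | σ a ∉ (B : Set ℕ)}.Finite := by
  have hVo := hback _ (basic_inr_open ℬ B (∅ : Finset ℕ))
  have hmem : Sum.inr A ∈ e.symm ''
      (insert (Sum.inr B) (Sum.inl '' ((B : Set ℕ) \ ↑(∅ : Finset ℕ)))) := by
    rw [mem_symm_image, hAB]
    exact Set.mem_insert _ _
  have h2 := open_finite_misses hVo hmem
  apply h2.subset
  intro a ha
  refine ⟨ha.1, fun hmem' => ha.2 ?_⟩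
  rw [mem_symm_image, hσ a] at hmem'
  simp only [Set.mem_insert_iff, Set.mem_image] at hmem'
  rcases hmem' with h | ⟨b, hb, hb2⟩
  · exact absurd h (by simp)
  · have hba := Sum.inl.inj hb2
    subst hba
    exact hb.1

lemma almost_eq (h𝒜inf : ∀ A ∈ 𝒜, A.Infinite)
    (hfor : ∀ U, (psiTop 𝒜).IsOpen U → (psiTop ℬ).IsOpen (e '' U))
    (hback : ∀ U, (psiTop ℬ).IsOpen U → (psiTop 𝒜).IsOpen (e.symm '' U))
    (σ : ℕ → ℕ) (hσ : ∀ n, e (Sum.inl n) = Sum.inl (σ n))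
    {A : ↥𝒜} {B : ↥ℬ} (hAB : e (Sum.inr A) = Sum.inr B) :
    (σ '' (A : Set ℕ) \ (B : Set ℕ)).Finite ∧
    ((B : Set ℕ) \ σ '' (A : Set ℕ)).Finite := by
  constructor
  · have h1 := image_almost_subset hback σ hσ hAB
    apply (h1.image σ).subset
    rintro x ⟨⟨a, ha, rfl⟩, hx⟩
    exact ⟨a, ⟨ha, hx⟩, rfl⟩
  · choose τ hτ using homeo_inl (e := e.symm) h𝒜inf hback
    have hback' : ∀ U, (psiTop 𝒜).IsOpen U → (psiTop ℬ).IsOpen (e.symm.symm '' U) := by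
      intro U hU; rw [Equiv.symm_symm]; exact hfor U hU
    have hBA : e.symm (Sum.inr B) = Sum.inr A := by
      rw [← hAB, e.symm_apply_apply]
    have h1 := image_almost_subset (e := e.symm) hback' τ hτ hBA
    apply h1.subset
    intro b hb
    refine ⟨hb.1, fun hτb => hb.2 ?_⟩
    have hb' : e (Sum.inl (τ b)) = Sum.inl b := by
      rw [← hτ b, e.apply_symm_apply]
    have hστ : σ (τ b) = b := Sum.inl.inj ((hσ (τ b)).symm.trans hb')
    exact ⟨τ b, hτb, hστ⟩

/-- Recovery: `ℬ` is determined by `𝒜` and the trace `σ` of the homeomorphism. -/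
lemma recovery (h𝒜 : ADFamily 𝒜) (hsub : ℬ ⊆ 𝒜) (hℬinf : ∀ B ∈ ℬ, B.Infinite)
    (hfor : ∀ U, (psiTop 𝒜).IsOpen U → (psiTop ℬ).IsOpen (e '' U))
    (hback : ∀ U, (psiTop ℬ).IsOpen U → (psiTop 𝒜).IsOpen (e.symm '' U))
    (σ : ℕ → ℕ) (hσ : ∀ n, e (Sum.inl n) = Sum.inl (σ n)) :
    ∀ B : Set ℕ, B ∈ ℬ ↔ B ∈ 𝒜 ∧ ∃ A ∈ 𝒜,
      (σ '' A \ B).Finite ∧ (B \ σ '' A).Finite := by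
  obtain ⟨-, h𝒜inf, hAD⟩ := h𝒜
  intro B
  constructor
  · intro hB
    refine ⟨hsub hB, ?_⟩
    obtain ⟨A, hA⟩ : ∃ A : ↥𝒜, e.symm (Sum.inr ⟨B, hB⟩) = Sum.inr A := by
      rcases h : e.symm (Sum.inr (⟨B, hB⟩ : ↥ℬ)) with m | A
      · exfalso
        have h2 : e (e.symm (Sum.inr (⟨B, hB⟩ : ↥ℬ))) = Sum.inl (σ m) := by
          rw [h]; exact hσ m
        rw [e.apply_symm_apply] at h2
        simp at h2
      · exact ⟨A, rfl⟩
    have hAB : e (Sum.inr A) = Sum.inr (⟨B, hB⟩ : ↥ℬ) := by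
      rw [← hA, e.apply_symm_apply]
    obtain ⟨h1, h2⟩ := almost_eq h𝒜inf hfor hback σ hσ hAB
    exact ⟨A.1, A.2, h1, h2⟩
  · rintro ⟨hB𝒜, A, hA, h1, h2⟩
    obtain ⟨B', hB'⟩ := homeo_inr h𝒜inf hback (⟨A, hA⟩ : ↥𝒜)
    obtain ⟨h1', h2'⟩ := almost_eq h𝒜inf hfor hback σ hσ hB'
    have hdiff : (B \ (B' : Set ℕ)).Finite := by
      apply (h2.union h1').subset
      intro x hx
      by_cases hσA : x ∈ σ '' (A : Set ℕ)
      · exact Or.inr ⟨hσA, hx.2⟩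
      · exact Or.inl ⟨hx.1, hσA⟩
    have hBB' : B = (B' : Set ℕ) := by
      by_contra hne
      have hfin := hAD B hB𝒜 B'.1 (hsub B'.2) hne
      have hBsub : B ⊆ (B ∩ (B' : Set ℕ)) ∪ (B \ (B' : Set ℕ)) := by
        intro x hx
        by_cases h : x ∈ (B' : Set ℕ)
        · exact Or.inl ⟨hx, h⟩
        · exact Or.inr ⟨hx, h⟩
      exact h𝒜inf B hB𝒜 ((hfin.union hdiff).subset hBsub)
    rw [hBB']
    exact B'.2

end Homeo

end PsiAux

/-- If 2^{ℵ₀} < 2^{ℵ₁}, then every AD family of size ω₁ has a subfamily of size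
ω₁ whose Ψ-space is not homeomorphic to the original one. -/
theorem exists_nonhomeomorphic_subfamily
    (hc : (2 : Cardinal) ^ Cardinal.aleph0 < (2 : Cardinal) ^ Cardinal.aleph 1)
    (𝒜 : Set (Set ℕ)) (h𝒜 : ADFamily 𝒜) (hc𝒜 : Cardinal.mk ↥𝒜 = Cardinal.aleph 1) :
    ∃ ℬ : Set (Set ℕ), ℬ ⊆ 𝒜 ∧ Cardinal.mk ↥ℬ = Cardinal.aleph 1 ∧
      ¬ Nonempty (@Homeomorph (ℕ ⊕ ↥𝒜) (ℕ ⊕ ↥ℬ) (psiTop 𝒜) (psiTop ℬ)) := by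
  by_contra hcon
  push_neg at hcon
  have hc0 : (2 : Cardinal.{0}) ^ Cardinal.aleph0 < (2 : Cardinal.{0}) ^ Cardinal.aleph 1 := by
    rw [← PsiAux.lift_two_power_aleph0, ← PsiAux.lift_two_power_aleph1] at hc
    exact Cardinal.lift_lt.mp hc
  have h𝒜inf := h𝒜.2.1
  have key : ∀ X : Set ↥𝒜, ¬ X.Countable → ∃ σ : ℕ → ℕ, ∀ B : Set ℕ,
      B ∈ Subtype.val '' X ↔ B ∈ 𝒜 ∧ ∃ A ∈ 𝒜,
        (σ '' A \ B).Finite ∧ (B \ σ '' A).Finite := by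
    intro X hX
    set ℬ : Set (Set ℕ) := Subtype.val '' X with hℬdef
    have hsub : ℬ ⊆ 𝒜 := by rintro B ⟨⟨B, hB⟩, -, rfl⟩; exact hB
    have hmkℬ : Cardinal.mk ↥ℬ = Cardinal.aleph 1 := by
      have he : Cardinal.mk ↥ℬ = Cardinal.mk ↥X :=
        Cardinal.mk_image_eq Subtype.val_injective
      have hle : Cardinal.mk ↥X ≤ Cardinal.aleph 1 := hc𝒜 ▸ Cardinal.mk_set_le X
      have hlt : Cardinal.aleph0 < Cardinal.mk ↥X := by
        rw [← not_le, Cardinal.mk_le_aleph0_iff, Set.countable_coe_iff]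
        exact hX
      rw [he]
      refine le_antisymm hle ?_
      rw [← Cardinal.succ_aleph0]
      exact Order.succ_le_of_lt hlt
    obtain ⟨H⟩ := hcon ℬ hsub hmkℬ
    set e : (ℕ ⊕ ↥𝒜) ≃ (ℕ ⊕ ↥ℬ) :=
      @Homeomorph.toEquiv _ _ (psiTop 𝒜) (psiTop ℬ) H with hedef
    have hfor : ∀ U, (psiTop 𝒜).IsOpen U → (psiTop ℬ).IsOpen (e '' U) := by
      intro U hU
      exact (@Homeomorph.isOpen_image _ _ (psiTop 𝒜) (psiTop ℬ) H U).mpr hU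
    have hback : ∀ U, (psiTop ℬ).IsOpen U → (psiTop 𝒜).IsOpen (e.symm '' U) := by
      intro U hU
      exact (@Homeomorph.isOpen_image _ _ (psiTop ℬ) (psiTop 𝒜)
        (@Homeomorph.symm _ _ (psiTop 𝒜) (psiTop ℬ) H) U).mpr hU
    have hℬinf : ∀ B ∈ ℬ, B.Infinite := fun B hB => h𝒜inf B (hsub hB)
    choose σ hσ using PsiAux.homeo_inl (e := e) hℬinf hfor
    exact ⟨σ, PsiAux.recovery h𝒜 hsub hℬinf hfor hback σ hσ⟩
  -- injection from uncountable subsets into ℕ → ℕ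
  have hT2 : Cardinal.mk {X : Set ↥𝒜 // ¬ X.Countable}
      ≤ (2 : Cardinal) ^ Cardinal.aleph0 := by
    have hinj : Cardinal.mk {X : Set ↥𝒜 // ¬ X.Countable} ≤ Cardinal.mk (ℕ → ℕ) := by
      apply Cardinal.mk_le_of_injective (f := fun X => (key X.1 X.2).choose)
      intro X Y hXY
      have hXY' : (key X.1 X.2).choose = (key Y.1 Y.2).choose := hXY
      have hX := (key X.1 X.2).choose_spec
      have hY := (key Y.1 Y.2).choose_spec
      rw [hXY'] at hX
      have himg : Subtype.val '' X.1 = Subtype.val '' Y.1 := by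
        ext B; rw [hX B, hY B]
      exact Subtype.ext (Set.image_injective.mpr Subtype.val_injective himg)
    refine hinj.trans ?_
    rw [Cardinal.mk_arrow]
    simp only [Cardinal.mk_nat, Cardinal.lift_id]
    rw [Cardinal.power_self_eq le_rfl]
  -- injection from countable subsets into ℕ → Option ↥𝒜
  have hT1 : Cardinal.mk {X : Set ↥𝒜 // X.Countable}
      ≤ (2 : Cardinal) ^ Cardinal.aleph0 := by
    have key2 : ∀ X : Set ↥𝒜, X.Countable → ∃ f : ℕ → Option ↥𝒜,
        ∀ a, a ∈ X ↔ some a ∈ Set.range f := by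
      intro X hX
      have hc' : (Option.some '' X ∪ {none} : Set (Option ↥𝒜)).Countable :=
        (hX.image _).union (Set.countable_singleton _)
      obtain ⟨f, hf⟩ := hc'.exists_eq_range ⟨none, Or.inr rfl⟩
      refine ⟨f, fun a => ?_⟩
      constructor
      · intro ha
        rw [← hf]
        exact Or.inl ⟨a, ha, rfl⟩
      · intro ha
        rw [← hf] at ha
        rcases ha with ⟨b, hb, hba⟩ | h
        · rwa [← Option.some_injective _ hba]
        · simp at h
    have hinj : Cardinal.mk {X : Set ↥𝒜 // X.Countable}
        ≤ Cardinal.mk (ℕ → Option ↥𝒜) := by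
      apply Cardinal.mk_le_of_injective (f := fun X => (key2 X.1 X.2).choose)
      intro X Y hXY
      have hXY' : (key2 X.1 X.2).choose = (key2 Y.1 Y.2).choose := hXY
      have hX := (key2 X.1 X.2).choose_spec
      have hY := (key2 Y.1 Y.2).choose_spec
      rw [hXY'] at hX
      apply Subtype.ext
      ext a
      rw [hX a, hY a]
    refine hinj.trans ?_
    rw [Cardinal.mk_arrow]
    simp only [Cardinal.mk_nat, Cardinal.lift_id, Cardinal.mk_option, hc𝒜]
    calc (Cardinal.aleph 1 + 1) ^ Cardinal.aleph0
        ≤ ((2 : Cardinal) ^ Cardinal.aleph0) ^ Cardinal.aleph0 := by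
          apply Cardinal.power_le_power_right
          calc Cardinal.aleph 1 + 1 ≤ Cardinal.aleph 1 + Cardinal.aleph 1 :=
                add_le_add_right (Cardinal.one_le_aleph0.trans
                  (Cardinal.aleph0_le_aleph 1)) _
            _ = Cardinal.aleph 1 := Cardinal.add_eq_self (Cardinal.aleph0_le_aleph 1)
            _ ≤ 𝔠 := Cardinal.aleph_one_le_continuum
            _ = (2 : Cardinal) ^ Cardinal.aleph0 := Cardinal.two_power_aleph0.symm
      _ = (2 : Cardinal) ^ (Cardinal.aleph0 * Cardinal.aleph0) := Cardinal.power_mul.symm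
      _ = (2 : Cardinal) ^ Cardinal.aleph0 := by rw [Cardinal.aleph0_mul_aleph0]
  -- combine
  have htot : (2 : Cardinal) ^ Cardinal.aleph 1 ≤ (2 : Cardinal) ^ Cardinal.aleph0 := by
    have hsum := Cardinal.mk_sum_compl ({X : Set ↥𝒜 | X.Countable})
    calc (2 : Cardinal) ^ Cardinal.aleph 1
        = Cardinal.mk (Set ↥𝒜) := by rw [Cardinal.mk_set, hc𝒜]
      _ = Cardinal.mk ↥{X : Set ↥𝒜 | X.Countable}
          + Cardinal.mk ↥({X : Set ↥𝒜 | X.Countable}ᶜ) := hsum.symm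
      _ ≤ (2 : Cardinal) ^ Cardinal.aleph0 + (2 : Cardinal) ^ Cardinal.aleph0 :=
          add_le_add hT1 hT2
      _ = (2 : Cardinal) ^ Cardinal.aleph0 := Cardinal.add_eq_self
            (by rw [Cardinal.two_power_aleph0]; exact Cardinal.aleph0_le_continuum)
  exact absurd htot (not_le.mpr hc0)
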